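/- arXiv:2510.14124 — 2 statements merged into one kernel-verified Lean document; each statement's English description precedes it below -/
import Mathlib

section
/- The generating function identity ∑_{N≥0} p(2N, 4, N) z^N = (1 - z + z^2) / ((1-z)^2 (1-z^2)(1-z^3)) holds as an identity of formal power series. -/
/-- `pBdd n m N` is the number of partitions of `n` into at most `m` parts,
each part at most `N`; it is `0` for negative `n`. -/
noncomputable def pBdd (n : ℤ) (m N : ℕ) : ℕ :=
  if 0 ≤ n then
    Nat.card {π : Nat.Partition n.toNat //
      Multiset.card π.parts ≤ m ∧ ∀ i ∈ π.parts, i ≤ N}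
  else 0

/-- `pAtMost n m` is the number of partitions of `n` into at most `m` parts;
it is `0` for negative `n`. -/
noncomputable def pAtMost (n : ℤ) (m : ℕ) : ℕ :=
  if 0 ≤ n then
    Nat.card {π : Nat.Partition n.toNat // Multiset.card π.parts ≤ m}
  else 0

open PowerSeries

open Multiset Finset
set_option maxHeartbeats 1000000

lemma msum_map_pred (s : Multiset ℕ) : (s.map (· - 1)).sum + Multiset.card s = s.sum + Multiset.card (s.filter (· = 0)) := by
  induction s using Multiset.induction with
  | empty => simp
  | cons a s ih =>
      simp only [Multiset.map_cons, Multiset.sum_cons, Multiset.card_cons, Multiset.filter_cons]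
      rcases Nat.eq_zero_or_pos a with h | h
      · subst h; rw [if_pos rfl]; simp only [Multiset.card_add, Multiset.card_singleton]; omega
      · rw [if_neg (by omega)]; simp only [Multiset.card_add, Multiset.card_zero]; omega

lemma msum_map_succ (s : Multiset ℕ) : (s.map (· + 1)).sum = s.sum + Multiset.card s := by
  induction s using Multiset.induction with
  | empty => simp
  | cons a s ih => simp only [Multiset.map_cons, Multiset.sum_cons, Multiset.card_cons, ih]; omega

lemma mcard_le_sum (s : Multiset ℕ) (h : ∀ x ∈ s, 0 < x) : Multiset.card s ≤ s.sum := by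
  induction s using Multiset.induction with
  | empty => simp
  | cons a s ih =>
      simp only [Multiset.card_cons, Multiset.sum_cons]
      have := h a (Multiset.mem_cons_self a s)
      have := ih fun x hx => h x (Multiset.mem_cons_of_mem hx)
      omega

lemma mem_le_sum (s : Multiset ℕ) {a : ℕ} (h : a ∈ s) : a ≤ s.sum := by
  rw [← Multiset.cons_erase h, Multiset.sum_cons]; omega

lemma two_mem_le_sum (s : Multiset ℕ) {a b : ℕ} (ha : a ∈ s) (hb : b ∈ s) (hab : a ≠ b) :
    a + b ≤ s.sum := by
  rw [← Multiset.cons_erase ha, Multiset.sum_cons]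
  have hb' : b ∈ s.erase a := by
    rw [Multiset.mem_erase_of_ne (by omega)]; exact hb
  have := mem_le_sum _ hb'
  omega

/-- forward multiset op: subtract one from each part, drop zeros -/
def fwd (s : Multiset ℕ) : Multiset ℕ := (s.map (· - 1)).filter (0 < ·)

lemma fwd_eq (s : Multiset ℕ) : fwd s = (s.filter (1 < ·)).map (· - 1) := by
  rw [fwd, Multiset.filter_map]
  congr 1
  apply Multiset.filter_congr
  intro x _
  constructor <;> intro h <;> simp_all

lemma fwd_sum (s : Multiset ℕ) (hs : ∀ x ∈ s, 0 < x) :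
    (fwd s).sum + Multiset.card s = s.sum := by
  have h1 := msum_map_pred s
  have h2 : s.filter (· = 0) = 0 := by
    rw [Multiset.filter_eq_nil]
    intro a ha h0
    exact absurd (hs a ha) (by omega)
  have h3 : (fwd s).sum = (s.map (· - 1)).sum := by
    rw [fwd]
    conv_rhs => rw [← Multiset.filter_add_not (0 < ·) (s.map (· - 1))]
    rw [Multiset.sum_add]
    have : ((s.map (· - 1)).filter (fun a => ¬ 0 < a)).sum = 0 := by
      apply Multiset.sum_eq_zero
      intro x hx
      have := Multiset.of_mem_filter hx
      omega
    omega
  rw [h3, h1, h2]; simp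

lemma fwd_card (s : Multiset ℕ) : Multiset.card (fwd s) ≤ Multiset.card s := by
  rw [fwd]
  calc Multiset.card ((s.map (· - 1)).filter (0 < ·)) ≤ Multiset.card (s.map (· - 1)) :=
        Multiset.card_le_card (Multiset.filter_le _ _)
    _ = Multiset.card s := Multiset.card_map _ _

/-- backward multiset op -/
def bwd (t : Multiset ℕ) (k : ℕ) : Multiset ℕ := t.map (· + 1) + Multiset.replicate k 1

lemma bwd_fwd (s : Multiset ℕ) (hs : ∀ x ∈ s, 0 < x) :
    bwd (fwd s) (Multiset.card s - Multiset.card (fwd s)) = s := by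
  have hcard : Multiset.card (fwd s) = Multiset.card (s.filter (1 < ·)) := by
    rw [fwd_eq, Multiset.card_map]
  rw [hcard, fwd_eq, bwd]
  have h1 : ((s.filter (1 < ·)).map (· - 1)).map (· + 1) = s.filter (1 < ·) := by
    rw [Multiset.map_map]
    nth_rewrite 2 [← Multiset.map_id (s.filter (1 < ·))]
    apply Multiset.map_congr rfl
    intro x hx
    have := Multiset.of_mem_filter hx
    simp only [Function.comp_apply, id_eq]
    omega
  rw [h1]
  have h2 : s.filter (fun a => ¬ 1 < a) = Multiset.replicate (Multiset.card s - Multiset.card (s.filter (1 < ·))) 1 := by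
    rw [Multiset.eq_replicate]
    have hc := congrArg Multiset.card (Multiset.filter_add_not (1 < ·) s)
    rw [Multiset.card_add] at hc
    constructor
    · omega
    · intro b hb
      have h1 := Multiset.of_mem_filter hb
      have h2 := hs b (Multiset.mem_of_mem_filter hb)
      omega
  rw [← h2, Multiset.filter_add_not]

lemma fwd_bwd (t : Multiset ℕ) (ht : ∀ x ∈ t, 0 < x) (k : ℕ) : fwd (bwd t k) = t := by
  rw [fwd, bwd, Multiset.map_add, Multiset.map_map, Multiset.map_replicate, Multiset.filter_add]
  have h1 : t.map ((fun x => x - 1) ∘ (· + 1)) = t := by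
    nth_rewrite 2 [← Multiset.map_id t]
    apply Multiset.map_congr rfl
    intro x hx
    simp
  rw [h1, Multiset.filter_eq_self.2 ht]
  have : Multiset.filter (fun x => 0 < x) (Multiset.replicate k (1-1)) = 0 := by
    rw [Multiset.filter_eq_nil]
    intro a ha
    have := Multiset.eq_of_mem_replicate ha
    omega
  rw [this, add_zero]


/-- number of partitions of `n` into at most `m` parts. -/
noncomputable def Pc (n m : ℕ) : ℕ :=
  Nat.card {π : Nat.Partition n // Multiset.card π.parts ≤ m}

lemma Pc_eq_filter (n m : ℕ) :
    Pc n m = (Finset.univ.filter fun π : Nat.Partition n => Multiset.card π.parts ≤ m).card := by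
  rw [Pc, Nat.card_eq_fintype_card, Fintype.card_subtype]

/-- partitions with exactly m parts of n  ≃  partitions of n - m with at most m parts -/
def exactEquiv (n m : ℕ) (h : m ≤ n) :
    {π : Nat.Partition n // Multiset.card π.parts = m} ≃
    {μ : Nat.Partition (n - m) // Multiset.card μ.parts ≤ m} where
  toFun π := ⟨⟨fwd π.1.parts,
      fun {i} hi => Multiset.of_mem_filter hi,
      by
        have := fwd_sum π.1.parts (fun x hx => π.1.parts_pos hx)
        rw [π.1.parts_sum, π.2] at this
        omega⟩,
      by
        have := fwd_card π.1.parts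
        rw [π.2] at this
        exact this⟩
  invFun μ := ⟨⟨bwd μ.1.parts (m - Multiset.card μ.1.parts),
      by
        intro i hi
        simp only [bwd] at hi
        rw [Multiset.mem_add] at hi
        rcases hi with hi | hi
        · obtain ⟨a, _, rfl⟩ := Multiset.mem_map.1 hi
          omega
        · have := Multiset.eq_of_mem_replicate hi
          omega,
      by
        simp only [bwd]
        rw [Multiset.sum_add, msum_map_succ, Multiset.sum_replicate, μ.1.parts_sum,
          smul_eq_mul, mul_one]
        have := μ.2
        omega⟩,
      by
        simp only [bwd]
        rw [Multiset.card_add, Multiset.card_map, Multiset.card_replicate]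
        have := μ.2
        omega⟩
  left_inv π := by
    apply Subtype.ext
    apply Nat.Partition.ext
    simp only
    have hc : Multiset.card (fwd π.1.parts) ≤ m := by
      have := fwd_card π.1.parts; rw [π.2] at this; exact this
    rw [show m - Multiset.card (fwd π.1.parts)
        = Multiset.card π.1.parts - Multiset.card (fwd π.1.parts) by rw [π.2]]
    exact bwd_fwd π.1.parts (fun x hx => π.1.parts_pos hx)
  right_inv μ := by
    apply Subtype.ext
    apply Nat.Partition.ext
    simp only
    exact fwd_bwd μ.1.parts (fun x hx => μ.1.parts_pos hx) _

/-- the recurrence -/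
lemma Pc_rec (n m : ℕ) :
    Pc n (m + 1) = Pc n m + (if m + 1 ≤ n then Pc (n - (m+1)) (m+1) else 0) := by
  have hsplit : (Finset.univ.filter fun π : Nat.Partition n => Multiset.card π.parts ≤ m + 1)
      = (Finset.univ.filter fun π : Nat.Partition n => Multiset.card π.parts ≤ m)
        ∪ (Finset.univ.filter fun π : Nat.Partition n => Multiset.card π.parts = m + 1) := by
    rw [← Finset.filter_or]
    apply Finset.filter_congr
    intro π _
    constructor <;> intro h <;> [omega; omega]
  have hdisj : Disjoint
      (Finset.univ.filter fun π : Nat.Partition n => Multiset.card π.parts ≤ m)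
      (Finset.univ.filter fun π : Nat.Partition n => Multiset.card π.parts = m + 1) := by
    rw [Finset.disjoint_left]
    intro π h1 h2
    rw [Finset.mem_filter] at h1 h2
    omega
  have hexact : (Finset.univ.filter fun π : Nat.Partition n => Multiset.card π.parts = m + 1).card
      = if m + 1 ≤ n then Pc (n - (m+1)) (m+1) else 0 := by
    split_ifs with h
    · rw [Pc, Nat.card_eq_fintype_card, ← Fintype.card_subtype]
      exact Fintype.card_congr (exactEquiv n (m+1) h)
    · rw [Finset.card_eq_zero, Finset.filter_eq_empty_iff]
      intro π _
      intro hcard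
      have h1 := mcard_le_sum π.parts (fun x hx => π.parts_pos hx)
      rw [π.parts_sum, hcard] at h1
      omega
  rw [Pc_eq_filter, Pc_eq_filter, hsplit, Finset.card_union_of_disjoint hdisj, hexact]

lemma card_parts_le (n : ℕ) (π : Nat.Partition n) : Multiset.card π.parts ≤ n := by
  have := mcard_le_sum π.parts (fun x hx => π.parts_pos hx)
  rwa [π.parts_sum] at this

lemma Pc_zero (n : ℕ) : Pc n 0 = if n = 0 then 1 else 0 := by
  rw [Pc_eq_filter]
  split_ifs with h
  · subst h
    rw [Finset.filter_true_of_mem (fun π _ => Nat.le_zero.2 (Nat.le_zero.1 (card_parts_le 0 π)))]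
    rw [Finset.card_univ, Fintype.card_unique]
  · rw [Finset.card_eq_zero, Finset.filter_eq_empty_iff]
    intro π _ hc
    have h1 : π.parts = 0 := Multiset.card_eq_zero.1 (Nat.le_zero.1 hc)
    have h2 := π.parts_sum
    rw [h1] at h2
    simp at h2
    exact h (h2.symm)

lemma gf_step (m : ℕ) :
    (PowerSeries.mk fun n => (Pc n (m+1) : ℤ)) * (1 - X^(m+1))
      = PowerSeries.mk fun n => (Pc n m : ℤ) := by
  ext n
  rw [mul_sub, mul_one, map_sub, coeff_mul_X_pow']
  have hrec := Pc_rec n m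
  split_ifs with h
  · rw [if_pos h] at hrec
    simp only [coeff_mk]
    push_cast [hrec]
    ring
  · rw [if_neg h] at hrec
    simp only [coeff_mk]
    push_cast [hrec]
    ring

lemma gf (m : ℕ) :
    (PowerSeries.mk fun n => (Pc n m : ℤ)) * ∏ i ∈ Finset.range m, (1 - X^(i+1)) = 1 := by
  induction m with
  | zero =>
      rw [Finset.range_zero, Finset.prod_empty, mul_one]
      ext n
      rw [coeff_mk, Pc_zero]
      split_ifs with h
      · subst h; simp
      · rw [coeff_one, if_neg h]; simp
  | succ m ih =>
      rw [Finset.prod_range_succ, show (PowerSeries.mk fun n => (Pc n (m+1) : ℤ)) *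
          ((∏ i ∈ Finset.range m, (1 - X^(i+1))) * (1 - X^(m+1)))
        = ((PowerSeries.mk fun n => (Pc n (m+1) : ℤ)) * (1 - X^(m+1))) *
          ∏ i ∈ Finset.range m, (1 - X^(i+1)) by ring, gf_step, ih]

/-- partitions of n with ≤ m+1 parts containing part v  ≃  partitions of n-v with ≤ m parts -/
def eraseEquiv (n v m : ℕ) (hv : 0 < v) (hvn : v ≤ n) :
    {π : Nat.Partition n // Multiset.card π.parts ≤ m + 1 ∧ v ∈ π.parts} ≃
    {μ : Nat.Partition (n - v) // Multiset.card μ.parts ≤ m} where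
  toFun π := ⟨⟨π.1.parts.erase v,
      fun {i} hi => π.1.parts_pos (Multiset.mem_of_mem_erase hi),
      by
        have h1 := congrArg Multiset.sum (Multiset.cons_erase π.2.2)
        rw [Multiset.sum_cons, π.1.parts_sum] at h1
        omega⟩,
      by
        rw [Multiset.card_erase_of_mem π.2.2, Nat.pred_eq_sub_one]
        have h1 : 1 ≤ Multiset.card π.1.parts := by
          rw [Nat.one_le_iff_ne_zero, Ne, Multiset.card_eq_zero]
          intro h0
          exact absurd π.2.2 (by rw [h0]; exact Multiset.notMem_zero v)
        have h2 := π.2.1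
        omega⟩
  invFun μ := ⟨⟨v ::ₘ μ.1.parts,
      by
        intro i hi
        rcases Multiset.mem_cons.1 hi with rfl | hi
        · exact hv
        · exact μ.1.parts_pos hi,
      by rw [Multiset.sum_cons, μ.1.parts_sum]; omega⟩,
      by
        constructor
        · rw [Multiset.card_cons]
          have := μ.2
          omega
        · exact Multiset.mem_cons_self v _⟩
  left_inv π := by
    apply Subtype.ext; apply Nat.Partition.ext
    exact Multiset.cons_erase π.2.2
  right_inv μ := by
    apply Subtype.ext; apply Nat.Partition.ext
    exact Multiset.erase_cons_head v _

/-- count of box-bounded partitions (ℕ version of pBdd (2N) 4 N) -/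
noncomputable def Qc (N : ℕ) : ℕ :=
  Nat.card {π : Nat.Partition (2*N) //
    Multiset.card π.parts ≤ 4 ∧ ∀ i ∈ π.parts, i ≤ N}

lemma key_split (N : ℕ) :
    Pc (2*N) 4 = Qc N + ∑ i ∈ Finset.range N, Pc i 3 := by
  classical
  set good := Finset.univ.filter
    (fun π : Nat.Partition (2*N) => Multiset.card π.parts ≤ 4 ∧ ∀ i ∈ π.parts, i ≤ N) with hgood
  set bad := Finset.univ.filter
    (fun π : Nat.Partition (2*N) => Multiset.card π.parts ≤ 4 ∧ ∃ x ∈ π.parts, N < x) with hbad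
  have hsplit : (Finset.univ.filter
      fun π : Nat.Partition (2*N) => Multiset.card π.parts ≤ 4) = good ∪ bad := by
    rw [hgood, hbad, ← Finset.filter_or]
    apply Finset.filter_congr
    intro π _
    by_cases h : ∀ i ∈ π.parts, i ≤ N
    · constructor
      · intro h4; exact Or.inl ⟨h4, h⟩
      · rintro (⟨h4, _⟩ | ⟨h4, _⟩) <;> exact h4
    · push_neg at h
      obtain ⟨x, hx, hNx⟩ := h
      constructor
      · intro h4; exact Or.inr ⟨h4, x, hx, hNx⟩
      · rintro (⟨h4, _⟩ | ⟨h4, _⟩) <;> exact h4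
  have hdisj : Disjoint good bad := by
    rw [Finset.disjoint_left]
    intro π h1 h2
    rw [hgood, Finset.mem_filter] at h1
    rw [hbad, Finset.mem_filter] at h2
    obtain ⟨x, hx, hNx⟩ := h2.2.2
    exact absurd (h1.2.2 x hx) (by omega)
  have hgoodcard : good.card = Qc N := by
    rw [Qc, Nat.card_eq_fintype_card, Fintype.card_subtype, hgood]
  have hbadcard : bad.card = ∑ i ∈ Finset.range N, Pc i 3 := by
    have hbiUnion : bad = (Finset.Ico (N+1) (2*N+1)).biUnion
        (fun v => Finset.univ.filter
          (fun π : Nat.Partition (2*N) => Multiset.card π.parts ≤ 4 ∧ v ∈ π.parts)) := by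
      ext π
      rw [hbad, Finset.mem_filter, Finset.mem_biUnion]
      constructor
      · rintro ⟨_, h4, x, hx, hNx⟩
        refine ⟨x, ?_, ?_⟩
        · rw [Finset.mem_Ico]
          have := mem_le_sum π.parts hx
          rw [π.parts_sum] at this
          omega
        · rw [Finset.mem_filter]; exact ⟨Finset.mem_univ _, h4, hx⟩
      · rintro ⟨v, hv, hmem⟩
        rw [Finset.mem_filter] at hmem
        rw [Finset.mem_Ico] at hv
        exact ⟨Finset.mem_univ _, hmem.2.1, v, hmem.2.2, by omega⟩
    rw [hbiUnion, Finset.card_biUnion]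
    · -- evaluate each card and reindex
      have hcards : ∀ v ∈ Finset.Ico (N+1) (2*N+1),
          (Finset.univ.filter (fun π : Nat.Partition (2*N) =>
            Multiset.card π.parts ≤ 4 ∧ v ∈ π.parts)).card = Pc (2*N - v) 3 := by
        intro v hv
        rw [Finset.mem_Ico] at hv
        rw [Pc, Nat.card_eq_fintype_card, ← Fintype.card_subtype]
        exact Fintype.card_congr (eraseEquiv (2*N) v 3 (by omega) (by omega))
      rw [Finset.sum_congr rfl hcards]
      refine Finset.sum_bij' (fun v _ => 2*N - v) (fun i _ => 2*N - i) ?_ ?_ ?_ ?_ ?_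
      · intro v hv; rw [Finset.mem_Ico] at hv; rw [Finset.mem_range]; omega
      · intro i hi; rw [Finset.mem_range] at hi; rw [Finset.mem_Ico]; omega
      · intro v hv; rw [Finset.mem_Ico] at hv; omega
      · intro i hi; rw [Finset.mem_range] at hi; omega
      · intro v hv; rfl
    · -- pairwise disjoint
      intro v hv w hw hvw
      rw [Finset.mem_coe, Finset.mem_Ico] at hv hw
      simp only [Function.onFun]
      rw [Finset.disjoint_left]
      intro π h1 h2
      rw [Finset.mem_filter] at h1 h2
      have := two_mem_le_sum π.parts h1.2.2 h2.2.2 hvw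
      rw [π.parts_sum] at this
      omega
  rw [Pc_eq_filter, hsplit, Finset.card_union_of_disjoint hdisj, hgoodcard, hbadcard]

lemma coeff_helper (j n : ℕ) :
    (coeff n) ((PowerSeries.mk fun k => (Pc (2*k) 4 : ℤ)) * X^j)
      = (coeff (2*n)) ((PowerSeries.mk fun k => (Pc k 4 : ℤ)) * X^(2*j)) := by
  rw [coeff_mul_X_pow', coeff_mul_X_pow']
  have hh : 2*(n-j) = 2*n - 2*j := by omega
  split_ifs <;> first | omega | (simp only [coeff_mk, hh]) | rfl

lemma hE_lemma :
    (PowerSeries.mk fun k => (Pc (2*k) 4 : ℤ)) * ((1 - X)^2 * (1 - X^2) * (1 - X^3))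
      = 1 + X^2 := by
  have h4 : (PowerSeries.mk fun n => (Pc n 4 : ℤ)) *
      ((1 - X)*(1 - X^2)*(1 - X^3)*(1 - X^4)) = 1 := by
    have h := gf 4
    rw [Finset.prod_range_succ, Finset.prod_range_succ, Finset.prod_range_succ,
      Finset.prod_range_one] at h
    norm_num at h
    linear_combination h
  have hM : (PowerSeries.mk fun n => (Pc n 4 : ℤ)) * ((1-X^2)^2*(1-X^4)*(1-X^6))
      = (1+X)*(1+X^3) := by
    linear_combination ((1+X)*(1+X^3)) * h4
  set E := PowerSeries.mk fun k => (Pc (2*k) 4 : ℤ) with hE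
  set P4 := PowerSeries.mk fun n => (Pc n 4 : ℤ) with hP4
  ext n
  have expand : E * ((1 - X)^2 * (1 - X^2) * (1 - X^3))
      = E*X^0 - E*X^1 - E*X^1 + E*X^3 + E*X^4 - E*X^6 - E*X^6 + E*X^7 := by ring
  have expand2 : P4 * ((1-X^2)^2*(1-X^4)*(1-X^6))
      = P4*X^(2*0) - P4*X^(2*1) - P4*X^(2*1) + P4*X^(2*3) + P4*X^(2*4)
        - P4*X^(2*6) - P4*X^(2*6) + P4*X^(2*7) := by ring
  rw [expand]
  simp only [_root_.map_add, _root_.map_sub]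
  rw [coeff_helper 0, coeff_helper 1, coeff_helper 3, coeff_helper 4, coeff_helper 6,
    coeff_helper 7]
  rw [← _root_.map_sub, ← _root_.map_sub, ← _root_.map_add, ← _root_.map_add,
    ← _root_.map_sub, ← _root_.map_sub, ← _root_.map_add, ← expand2, hM]
  have hpoly : ((1+X)*(1+X^3) : PowerSeries ℤ) = 1 + X + X^3 + X^4 := by ring
  rw [hpoly]
  simp only [_root_.map_add, coeff_one, coeff_X, coeff_X_pow]
  split_ifs <;> omega

lemma hS_lemma :
    (PowerSeries.mk fun n => ((∑ i ∈ Finset.range n, Pc i 3 : ℕ) : ℤ)) * (1 - X)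
      = X * (PowerSeries.mk fun n => (Pc n 3 : ℤ)) := by
  ext n
  rw [mul_sub, mul_one, _root_.map_sub, show (X : PowerSeries ℤ) = X^1 by rw [pow_one],
    coeff_mul_X_pow', coeff_X_pow_mul']
  rcases n with _ | m
  · rw [if_neg (by omega), if_neg (by omega), coeff_mk]
    simp
  · rw [if_pos (by omega), if_pos (by omega)]
    simp only [coeff_mk, Nat.add_sub_cancel]
    push_cast [Finset.sum_range_succ]
    ring

theorem stmt5' :
    (PowerSeries.mk fun N : ℕ => (Qc N : ℤ)) *
      ((1 - X) ^ 2 * (1 - X ^ 2) * (1 - X ^ 3)) =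
    1 - X + X ^ 2 := by
  have h3 : (PowerSeries.mk fun n => (Pc n 3 : ℤ)) * ((1 - X)*(1 - X^2)*(1 - X^3)) = 1 := by
    have h := gf 3
    rw [Finset.prod_range_succ, Finset.prod_range_succ, Finset.prod_range_one] at h
    norm_num at h
    linear_combination h
  have hQ : (PowerSeries.mk fun N : ℕ => (Qc N : ℤ))
      = (PowerSeries.mk fun k => (Pc (2*k) 4 : ℤ))
        - (PowerSeries.mk fun n => ((∑ i ∈ Finset.range n, Pc i 3 : ℕ) : ℤ)) := by
    ext n
    rw [_root_.map_sub, coeff_mk, coeff_mk, coeff_mk]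
    have := key_split n
    push_cast [this]
    ring
  rw [hQ]
  linear_combination hE_lemma - ((1-X)*(1-X^2)*(1-X^3)) * hS_lemma - X * h3


lemma pBdd_eq_Qc (N : ℕ) : pBdd (2 * (N : ℤ)) 4 N = Qc N := by
  have h2 : (2 * (N : ℤ)) = ((2 * N : ℕ) : ℤ) := by push_cast; ring
  unfold pBdd Qc
  rw [h2, if_pos (Int.natCast_nonneg _)]
  simp only [Int.toNat_natCast]

/-- `∑_{N≥0} p(2N,4,N) z^N = (1-z+z^2) / ((1-z)^2 (1-z^2)(1-z^3))`. -/
theorem stmt5 :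
    (PowerSeries.mk fun N : ℕ => (pBdd (2 * (N : ℤ)) 4 N : ℤ)) *
      ((1 - X) ^ 2 * (1 - X ^ 2) * (1 - X ^ 3)) =
    1 - X + X ^ 2 := by
  have h : (PowerSeries.mk fun N : ℕ => (pBdd (2 * (N : ℤ)) 4 N : ℤ))
      = PowerSeries.mk fun N => (Qc N : ℤ) := by
    ext n
    rw [coeff_mk, coeff_mk, pBdd_eq_Qc]
  rw [h]
  exact stmt5'
end

section
/- For every nonnegative integer N, p(2N, 4, N) - p(2N - 1, 4, N) = p(N, 3) - p(N - 1, 3). -/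
set_option linter.unreachableTactic false
set_option linter.unusedTactic false

/-! ### Auxiliary development -/

/-- Sorted lists of fixed length, with given sum, entries bounded by `N`. -/
abbrev LS (n m N : ℕ) : Type :=
  {l : List ℕ // l.length = m ∧ l.Pairwise (· ≤ ·) ∧ l.sum = n ∧ ∀ i ∈ l, i ≤ N}

/-- Count vectors `(w,x,y,z)` with `4w+3x+2y+z = n` and `w+x+y+z ≤ N`. -/
abbrev C4T (n N : ℕ) : Type :=
  {q : ℕ × ℕ × ℕ × ℕ // 4*q.1 + 3*q.2.1 + 2*q.2.2.1 + q.2.2.2 = n ∧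
    q.1 + q.2.1 + q.2.2.1 + q.2.2.2 ≤ N}

/-- Count vectors `(x,y,z)` with `3x+2y+z = n`. -/
abbrev C3T (n : ℕ) : Type := {t : ℕ × ℕ × ℕ // 3*t.1 + 2*t.2.1 + t.2.2 = n}

/-- Count vectors `(w,x,y,z)` with `4w+3x+2y+z = 2N-1` and `w+x+y+z ≤ N-1`. -/
abbrev DT (N : ℕ) : Type :=
  {q : ℕ × ℕ × ℕ × ℕ // 4*q.1 + 3*q.2.1 + 2*q.2.2.1 + q.2.2.2 + 1 = 2*N ∧
    q.1 + q.2.1 + q.2.2.1 + q.2.2.2 + 1 ≤ N}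

lemma sorted_decomp (l : List ℕ) (h : l.Pairwise (· ≤ ·)) :
    l = List.replicate (l.count 0) 0 ++ l.filter (· ≠ 0) := by
  induction l with
  | nil => simp
  | cons a t ih =>
    rw [List.pairwise_cons] at h
    by_cases ha : a = 0
    · subst ha
      simp only [List.count_cons_self, List.replicate_succ, List.filter_cons]
      simp only [ne_eq, decide_not]
      rw [List.cons_append]
      congr 1
      simpa [ne_eq, decide_not] using ih h.2
    · have h0 : (a :: t).count 0 = 0 := by
        rw [List.count_eq_zero]
        intro hm
        rcases List.mem_cons.1 hm with h1 | h1
        · exact ha h1.symm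
        · have := h.1 0 h1; omega
      rw [h0]
      simp only [List.replicate_zero, List.nil_append]
      rw [List.filter_eq_self.2]
      intro x hx
      rcases List.mem_cons.1 hx with h1 | h1
      · simp [h1, ha]
      · have := h.1 x h1
        simp; omega

lemma filter_ne_zero_sum (l : List ℕ) : (l.filter (· ≠ 0)).sum = l.sum := by
  induction l with
  | nil => simp
  | cons a t ih =>
    by_cases ha : a = 0
    · subst ha; simpa [List.filter_cons] using ih
    · simp only [List.filter_cons]
      rw [if_pos (by simpa using ha)]
      simpa [List.sum_cons] using congrArg (a + ·) ih

lemma sort_of_sorted (l : List ℕ) (h : l.Pairwise (· ≤ ·)) :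
    Multiset.sort (↑l) (· ≤ ·) = l :=
  List.Perm.eq_of_pairwise' (Multiset.pairwise_sort _ _) h
    (Multiset.coe_eq_coe.mp (Multiset.sort_eq _ _))

/-- Partitions of `n` with at most `m` parts, each at most `N`, correspond to
sorted lists of length exactly `m` (padded with zeros). -/
def partEquivLS (n m N : ℕ) :
    {π : Nat.Partition n // Multiset.card π.parts ≤ m ∧ ∀ i ∈ π.parts, i ≤ N} ≃
      LS n m N where
  toFun π := ⟨List.replicate (m - Multiset.card π.1.parts) 0 ++
      Multiset.sort π.1.parts (· ≤ ·), by
    obtain ⟨π, hcard, hbd⟩ := π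
    have hlen : (Multiset.sort π.parts (· ≤ ·)).length = Multiset.card π.parts :=
      Multiset.length_sort _
    refine ⟨?_, ?_, ?_, ?_⟩
    · simp only [List.length_append, List.length_replicate, hlen]; omega
    · rw [List.pairwise_append]
      refine ⟨List.pairwise_replicate.2 (Or.inr (le_refl 0)),
        Multiset.pairwise_sort _ _, ?_⟩
      intro a ha b hb
      rw [List.eq_of_mem_replicate ha]
      exact Nat.zero_le b
    · rw [List.sum_append, List.sum_replicate, smul_zero, zero_add]
      have h : (Multiset.sort π.parts (· ≤ ·)).sum = π.parts.sum := by
        conv_rhs => rw [← Multiset.sort_eq π.parts (· ≤ ·)]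
        exact (Multiset.sum_coe _).symm
      rw [h, π.parts_sum]
    · intro i hi
      rcases List.mem_append.1 hi with h1 | h1
      · rw [List.eq_of_mem_replicate h1]; exact Nat.zero_le N
      · exact hbd i (Multiset.mem_sort _ |>.1 h1)⟩
  invFun l := ⟨⟨(↑(l.1.filter (· ≠ 0)) : Multiset ℕ), by
      intro i hi
      rw [Multiset.mem_coe, List.mem_filter] at hi
      have := hi.2; simp at this; omega, by
      obtain ⟨l, hlen, hs, hsum, hbd⟩ := l
      rw [Multiset.sum_coe, filter_ne_zero_sum, hsum]⟩, by
    obtain ⟨l, hlen, hs, hsum, hbd⟩ := l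
    constructor
    · simpa using (List.length_filter_le _ l).trans hlen.le
    · intro i hi
      rw [Multiset.mem_coe, List.mem_filter] at hi
      exact hbd i hi.1⟩
  left_inv := by
    rintro ⟨π, hcard, hbd⟩
    apply Subtype.ext
    ext1
    simp only
    rw [List.filter_append]
    have h1 : (List.replicate (m - Multiset.card π.parts) (0:ℕ)).filter (· ≠ 0) = [] := by
      simp [List.filter_replicate]
    have h2 : (Multiset.sort π.parts (· ≤ ·)).filter (· ≠ 0) =
        Multiset.sort π.parts (· ≤ ·) := by
      rw [List.filter_eq_self]
      intro x hx
      have := π.parts_pos (Multiset.mem_sort _ |>.1 hx)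
      simp; omega
    rw [h1, List.nil_append, h2, Multiset.sort_eq]
  right_inv := by
    rintro ⟨l, hlen, hs, hsum, hbd⟩
    apply Subtype.ext
    simp only
    have hsf : (l.filter (· ≠ 0)).Pairwise (· ≤ ·) := List.Pairwise.filter _ hs
    rw [sort_of_sorted _ hsf]
    have hcount : l.count 0 + (l.filter (· ≠ 0)).length = l.length := by
      conv_rhs => rw [sorted_decomp l hs]
      simp
    have hms : Multiset.card (↑(l.filter (· ≠ 0)) : Multiset ℕ) =
        (l.filter (· ≠ 0)).length := by simp
    rw [hms]
    have : m - (l.filter (· ≠ 0)).length = l.count 0 := by omega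
    rw [this]
    exact (sorted_decomp l hs).symm

lemma list_len4 {l : List ℕ} (h : l.length = 4) : ∃ a b c d, l = [a, b, c, d] := by
  rcases l with _ | ⟨a, _ | ⟨b, _ | ⟨c, _ | ⟨d, _ | ⟨e, t⟩⟩⟩⟩⟩ <;>
      simp only [List.length_cons, List.length_nil] at h <;> try omega
  exact ⟨a, b, c, d, rfl⟩

lemma list_len3 {l : List ℕ} (h : l.length = 3) : ∃ a b c, l = [a, b, c] := by
  rcases l with _ | ⟨a, _ | ⟨b, _ | ⟨c, _ | ⟨d, t⟩⟩⟩⟩ <;>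
      simp only [List.length_cons, List.length_nil] at h <;> try omega
  exact ⟨a, b, c, rfl⟩

/-- Staircase reparametrization: sorted 4-tuples in a box correspond to count vectors. -/
def lsEquivC4 (n N : ℕ) : LS n 4 N ≃ C4T n N where
  toFun l := ⟨(l.1.getD 0 0, l.1.getD 1 0 - l.1.getD 0 0,
      l.1.getD 2 0 - l.1.getD 1 0, l.1.getD 3 0 - l.1.getD 2 0), by
    obtain ⟨l, hlen, hs, hsum, hbd⟩ := l
    obtain ⟨a, b, c, d, rfl⟩ := list_len4 hlen
    simp only [List.pairwise_cons, List.mem_cons, List.not_mem_nil, or_false,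
      forall_eq_or_imp, forall_eq] at hs
    have hd : d ≤ N := hbd d (by simp)
    simp only [List.getD_cons_zero, List.getD_cons_succ, List.sum_cons,
      List.sum_nil] at hsum ⊢
    omega⟩
  invFun q := ⟨[q.1.1, q.1.1 + q.1.2.1, q.1.1 + q.1.2.1 + q.1.2.2.1,
      q.1.1 + q.1.2.1 + q.1.2.2.1 + q.1.2.2.2], by
    obtain ⟨⟨w, x, y, z⟩, h1, h2⟩ := q
    dsimp only at h1 h2 ⊢
    refine ⟨by simp, by simp [List.pairwise_cons]; omega, by simp; omega, ?_⟩
    intro i hi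
    simp only [List.mem_cons, List.not_mem_nil, or_false] at hi
    rcases hi with rfl | rfl | rfl | rfl <;> omega⟩
  left_inv := by
    rintro ⟨l, hlen, hs, hsum, hbd⟩
    apply Subtype.ext
    obtain ⟨a, b, c, d, rfl⟩ := list_len4 hlen
    simp only [List.pairwise_cons, List.mem_cons, List.not_mem_nil, or_false,
      forall_eq_or_imp, forall_eq] at hs
    dsimp only
    simp only [List.getD_cons_zero, List.getD_cons_succ, List.cons.injEq, and_true, true_and]
    omega
  right_inv := by
    rintro ⟨⟨w, x, y, z⟩, h1, h2⟩
    apply Subtype.ext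
    dsimp only
    simp only [List.getD_cons_zero, List.getD_cons_succ, Prod.mk.injEq, true_and]
    omega

/-- Staircase reparametrization for triples. -/
def lsEquivC3 (n : ℕ) : LS n 3 n ≃ C3T n where
  toFun l := ⟨(l.1.getD 0 0, l.1.getD 1 0 - l.1.getD 0 0, l.1.getD 2 0 - l.1.getD 1 0), by
    obtain ⟨l, hlen, hs, hsum, hbd⟩ := l
    obtain ⟨a, b, c, rfl⟩ := list_len3 hlen
    simp only [List.pairwise_cons, List.mem_cons, List.not_mem_nil, or_false,
      forall_eq_or_imp, forall_eq] at hs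
    simp only [List.getD_cons_zero, List.getD_cons_succ, List.sum_cons,
      List.sum_nil] at hsum ⊢
    omega⟩
  invFun t := ⟨[t.1.1, t.1.1 + t.1.2.1, t.1.1 + t.1.2.1 + t.1.2.2], by
    obtain ⟨⟨x, y, z⟩, h1⟩ := t
    dsimp only at h1 ⊢
    refine ⟨by simp, by simp [List.pairwise_cons]; omega, by simp; omega, ?_⟩
    intro i hi
    simp only [List.mem_cons, List.not_mem_nil, or_false] at hi
    rcases hi with rfl | rfl | rfl <;> omega⟩
  left_inv := by
    rintro ⟨l, hlen, hs, hsum, hbd⟩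
    apply Subtype.ext
    obtain ⟨a, b, c, rfl⟩ := list_len3 hlen
    simp only [List.pairwise_cons, List.mem_cons, List.not_mem_nil, or_false,
      forall_eq_or_imp, forall_eq] at hs
    dsimp only
    simp only [List.getD_cons_zero, List.getD_cons_succ, List.cons.injEq, and_true, true_and]
    omega
  right_inv := by
    rintro ⟨⟨x, y, z⟩, h1⟩
    apply Subtype.ext
    dsimp only
    simp only [List.getD_cons_zero, List.getD_cons_succ, Prod.mk.injEq, true_and]
    omega

/-- Split `C4T (2N) N` according to whether `z = 0`. -/
def c4SplitTop (N : ℕ) : C4T (2*N) N ≃ C3T N ⊕ DT N where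
  toFun q :=
    if hz : q.1.2.2.2 = 0 then
      Sum.inl ⟨(q.1.2.1 / 2, q.1.1, q.1.2.2.1), by
        obtain ⟨⟨w, x, y, z⟩, h1, h2⟩ := q
        dsimp only at h1 h2 hz ⊢
        omega⟩
    else
      Sum.inr ⟨(q.1.1, q.1.2.1, q.1.2.2.1, q.1.2.2.2 - 1), by
        obtain ⟨⟨w, x, y, z⟩, h1, h2⟩ := q
        dsimp only at h1 h2 hz ⊢
        omega⟩
  invFun s :=
    match s with
    | Sum.inl t => ⟨(t.1.2.1, 2 * t.1.1, t.1.2.2, 0), by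
        obtain ⟨⟨a, b, c⟩, h1⟩ := t
        dsimp only at h1 ⊢
        omega⟩
    | Sum.inr d => ⟨(d.1.1, d.1.2.1, d.1.2.2.1, d.1.2.2.2 + 1), by
        obtain ⟨⟨w, x, y, z⟩, h1, h2⟩ := d
        dsimp only at h1 h2 ⊢
        omega⟩
  left_inv := by
    rintro ⟨⟨w, x, y, z⟩, h1, h2⟩
    dsimp only at h1 h2
    by_cases hz : z = 0
    · subst hz
      dsimp only
      rw [dif_pos rfl]
      apply Subtype.ext
      simp only [Prod.mk.injEq, true_and, and_true]
      omega
    · dsimp only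
      rw [dif_neg hz]
      apply Subtype.ext
      simp only [Prod.mk.injEq, true_and, and_true]
      omega
  right_inv := by
    rintro (⟨⟨a, b, c⟩, h1⟩ | ⟨⟨w, x, y, z⟩, h1, h2⟩)
    · dsimp only at h1
      dsimp only
      rw [dif_pos rfl]
      congr 1
      apply Subtype.ext
      simp only [Prod.mk.injEq, true_and, and_true]
      try omega
    · dsimp only at h1 h2
      dsimp only
      rw [dif_neg (by omega)]
      all_goals
        first
        | rfl
        | (congr 1; apply Subtype.ext; simp only [Prod.mk.injEq, true_and, and_true]; omega)

/-- Split `C4T (2N-1) N` according to whether the number of parts is `N`. -/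
def c4SplitSub (N : ℕ) (hN : 1 ≤ N) : C4T (2*N - 1) N ≃ DT N ⊕ C3T (N - 1) where
  toFun q :=
    if hs : q.1.1 + q.1.2.1 + q.1.2.2.1 + q.1.2.2.2 + 1 ≤ N then
      Sum.inl ⟨q.1, by
        obtain ⟨⟨w, x, y, z⟩, h1, h2⟩ := q
        dsimp only at h1 h2 hs ⊢
        omega⟩
    else
      Sum.inr ⟨(q.1.1, q.1.2.1, q.1.2.2.1), by
        obtain ⟨⟨w, x, y, z⟩, h1, h2⟩ := q
        dsimp only at h1 h2 hs ⊢
        omega⟩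
  invFun s :=
    match s with
    | Sum.inl d => ⟨d.1, by
        obtain ⟨⟨w, x, y, z⟩, h1, h2⟩ := d
        dsimp only at h1 h2 ⊢
        omega⟩
    | Sum.inr t => ⟨(t.1.1, t.1.2.1, t.1.2.2, N - (t.1.1 + t.1.2.1 + t.1.2.2)), by
        obtain ⟨⟨a, b, c⟩, h1⟩ := t
        dsimp only at h1 ⊢
        omega⟩
  left_inv := by
    rintro ⟨⟨w, x, y, z⟩, h1, h2⟩
    dsimp only at h1 h2
    by_cases hs : w + x + y + z + 1 ≤ N
    · dsimp only
      rw [dif_pos hs]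
    · dsimp only
      rw [dif_neg hs]
      apply Subtype.ext
      simp only [Prod.mk.injEq, true_and, and_true]
      omega
  right_inv := by
    rintro (⟨⟨w, x, y, z⟩, h1, h2⟩ | ⟨⟨a, b, c⟩, h1⟩)
    · dsimp only at h1 h2
      dsimp only
      rw [dif_pos h2]
    · dsimp only at h1
      dsimp only
      rw [dif_neg (by omega)]
      all_goals
        first
        | rfl
        | (congr 1; apply Subtype.ext; simp only [Prod.mk.injEq, true_and, and_true]; omega)

/-! ### Cardinality lemmas -/

instance (n N : ℕ) : Finite (C4T n N) :=
  Finite.of_equiv _ ((partEquivLS n 4 N).trans (lsEquivC4 n N))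

instance (n : ℕ) : Finite (C3T n) := by
  have e : {π : Nat.Partition n // Multiset.card π.parts ≤ 3 ∧ ∀ i ∈ π.parts, i ≤ n} ≃
      C3T n := (partEquivLS n 3 n).trans (lsEquivC3 n)
  exact Finite.of_equiv _ e

instance (N : ℕ) : Finite (DT N) := by
  refine Finite.of_injective (fun d => (⟨d.1, by
    obtain ⟨⟨w, x, y, z⟩, h1, h2⟩ := d
    dsimp only at h1 h2 ⊢
    omega⟩ : C4T (2*N - 1) N)) ?_
  intro a b h
  apply Subtype.ext
  have := congrArg Subtype.val h
  simpa using this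

lemma pBdd_eq (n N : ℕ) : pBdd (n : ℤ) 4 N = Nat.card (C4T n N) := by
  rw [pBdd, if_pos (by positivity)]
  have : ((n : ℤ)).toNat = n := by omega
  rw [this]
  exact Nat.card_congr ((partEquivLS n 4 N).trans (lsEquivC4 n N))

lemma pAtMost_eq (n : ℕ) : pAtMost (n : ℤ) 3 = Nat.card (C3T n) := by
  rw [pAtMost, if_pos (by positivity)]
  have h1 : ((n : ℤ)).toNat = n := by omega
  rw [h1]
  refine Nat.card_congr (Equiv.trans ?_ ((partEquivLS n 3 n).trans (lsEquivC3 n)))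
  apply Equiv.subtypeEquivRight
  intro π
  constructor
  · intro h
    refine ⟨h, fun i hi => ?_⟩
    have := Multiset.single_le_sum (fun x _ => Nat.zero_le x) i hi
    rwa [π.parts_sum] at this
  · exact fun h => h.1

theorem stmt15 (N : ℕ) :
    (pBdd (2 * (N : ℤ)) 4 N : ℤ) - pBdd (2 * (N : ℤ) - 1) 4 N =
      (pAtMost (N : ℤ) 3 : ℤ) - pAtMost ((N : ℤ) - 1) 3 := by
  by_cases hN : N = 0
  · subst hN
    have h1 : pBdd (2 * ((0:ℕ) : ℤ)) 4 0 = Nat.card (C4T 0 0) := by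
      simpa using pBdd_eq 0 0
    have h2 : pBdd (2 * ((0:ℕ) : ℤ) - 1) 4 0 = 0 := by
      rw [pBdd, if_neg (by norm_num)]
    have h3 : pAtMost (((0:ℕ) : ℤ)) 3 = Nat.card (C3T 0) := by
      simpa using pAtMost_eq 0
    have h4 : pAtMost (((0:ℕ) : ℤ) - 1) 3 = 0 := by
      rw [pAtMost, if_neg (by norm_num)]
    have hc4 : Nat.card (C4T 0 0) = 1 := by
      have : Unique (C4T 0 0) := {
        default := ⟨(0, 0, 0, 0), by refine ⟨?_, ?_⟩ <;> simp⟩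
        uniq := by
          rintro ⟨⟨w, x, y, z⟩, hq1, hq2⟩
          apply Subtype.ext
          dsimp only at hq1 hq2
          simp only [Prod.mk.injEq]
          omega }
      haveI := this
      exact Nat.card_eq_one_iff_unique.mpr ⟨inferInstance, inferInstance⟩
    have hc3 : Nat.card (C3T 0) = 1 := by
      have : Unique (C3T 0) := {
        default := ⟨(0, 0, 0), by simp⟩
        uniq := by
          rintro ⟨⟨a, b, c⟩, hq⟩
          apply Subtype.ext
          dsimp only at hq
          simp only [Prod.mk.injEq]
          omega }
      haveI := this
      exact Nat.card_eq_one_iff_unique.mpr ⟨inferInstance, inferInstance⟩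
    rw [h1, h2, h3, h4, hc4, hc3]
    try norm_num
  · have hN1 : 1 ≤ N := Nat.one_le_iff_ne_zero.2 hN
    have e1 : (2 * (N : ℤ)) = ((2 * N : ℕ) : ℤ) := by push_cast; ring
    have e2 : (2 * (N : ℤ) - 1) = ((2 * N - 1 : ℕ) : ℤ) := by omega
    have e3 : ((N : ℤ) - 1) = ((N - 1 : ℕ) : ℤ) := by omega
    rw [e2, e1, e3, pBdd_eq, pBdd_eq, pAtMost_eq, pAtMost_eq]
    have key1 : Nat.card (C4T (2 * N) N) = Nat.card (C3T N) + Nat.card (DT N) := by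
      rw [Nat.card_congr (c4SplitTop N), Nat.card_sum]
    have key2 : Nat.card (C4T (2 * N - 1) N) = Nat.card (DT N) + Nat.card (C3T (N - 1)) := by
      rw [Nat.card_congr (c4SplitSub N hN1), Nat.card_sum]
    rw [key1, key2]
    push_cast
    ring
end
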